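/- Let T : D(T) ⊆ H → H be a densely defined, symmetric operator that is bounded from below, and let T^F be its Friedrichs extension. Then the bottom of the spectrum of T^F equals the infimum of ⟨Tv, v⟩/‖v‖² over all nonzero v ∈ D(T). -/

import Mathlib

open Filter Topology

/-- The spectrum of a (possibly unbounded) densely defined operator `T`, as in the paper:
the set of real `λ` such that `T - λ : D(T) → H` is not bijective. -/
def LinearPMap.paperSpectrum {H : Type*} [NormedAddCommGroup H] [InnerProductSpace ℝ H]
    (T : H →ₗ.[ℝ] H) : Set ℝ :=
  {l | ¬ Function.Bijective fun v : T.domain => T v - l • (v : H)}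

/-- `TF` is the Friedrichs extension of the densely defined symmetric operator `T`, bounded
from below with constant `c`: it is a self-adjoint extension of `T` whose domain consists of
those vectors of the domain of the adjoint `T*` that lie in the form-completion `H_T` of
`D(T)`, i.e. that are limits of sequences in `D(T)` which are Cauchy with respect to the
form norm `⟨v,w⟩_T = ⟨Tv,w⟩ + (1-c)⟨v,w⟩`. -/
structure IsFriedrichsExtension {H : Type*} [NormedAddCommGroup H] [InnerProductSpace ℝ H]
    [CompleteSpace H] (T TF : H →ₗ.[ℝ] H) (c : ℝ) : Prop where
  le : T ≤ TF
  selfAdjoint : IsSelfAdjoint TF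
  domain_sub_adjoint : TF.domain ≤ T.adjoint.domain
  agrees_with_adjoint : ∀ v : TF.domain, ∀ w : T.adjoint.domain, (v : H) = (w : H) →
    TF v = T.adjoint w
  domain_in_form_closure : ∀ v : TF.domain, ∃ u : ℕ → T.domain,
    Tendsto (fun n => ((u n : H))) atTop (𝓝 (v : H)) ∧
    (∀ ε > 0, ∃ N, ∀ m ≥ N, ∀ n ≥ N,
      (inner ℝ (T (u m - u n)) ((u m : H) - (u n : H)) : ℝ)
        + (1 - c) * ‖(u m : H) - (u n : H)‖ ^ 2 < ε)
  adjoint_form_domain : ∀ w : T.adjoint.domain,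
    ((∃ u : ℕ → T.domain, Tendsto (fun n => ((u n : H))) atTop (𝓝 (w : H)) ∧
      (∀ ε > 0, ∃ N, ∀ m ≥ N, ∀ n ≥ N,
        (inner ℝ (T (u m - u n)) ((u m : H) - (u n : H)) : ℝ)
          + (1 - c) * ‖(u m : H) - (u n : H)‖ ^ 2 < ε))) → (w : H) ∈ TF.domain

section Auxiliary

set_option linter.unusedSectionVars false
set_option linter.unusedVariables false
set_option maxHeartbeats 1000000

open LinearPMap

variable {H : Type*} [NormedAddCommGroup H] [InnerProductSpace ℝ H] [CompleteSpace H]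

/-- Cauchy-Schwarz from a nonnegative quadratic expansion. -/
private lemma cs_of_quadratic {x11 x12 x22 : ℝ}
    (h : ∀ t : ℝ, 0 ≤ x11 + 2 * t * x12 + t ^ 2 * x22) :
    x12 ^ 2 ≤ x11 * x22 := by
  have := discrim_le_zero (a := x22) (b := 2 * x12) (c := x11) (fun t => by nlinarith [h t])
  rw [discrim] at this; nlinarith

/-- A self-adjoint `LinearPMap` is symmetric. -/
private lemma sa_symm {TF : H →ₗ.[ℝ] H} (hsa : IsSelfAdjoint TF) (x y : TF.domain) :
    (inner ℝ (TF x) ((y : H)) : ℝ) = inner ℝ ((x : H)) (TF y) := by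
  have hd : Dense (TF.domain : Set H) := hsa.dense_domain
  have h := hsa
  rw [LinearPMap.isSelfAdjoint_def] at h
  have hfa := LinearPMap.adjoint_isFormalAdjoint (T := TF) hd
  rw [h] at hfa
  exact hfa x y

/-- A self-adjoint `LinearPMap` is closed (sequential form). -/
private lemma sa_closed {TF : H →ₗ.[ℝ] H} (hsa : IsSelfAdjoint TF) (v : ℕ → TF.domain) {x w : H}
    (hx : Tendsto (fun k => ((v k : H))) atTop (𝓝 x))
    (hw : Tendsto (fun k => TF (v k)) atTop (𝓝 w)) :
    ∃ x' : TF.domain, (x' : H) = x ∧ TF x' = w := by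
  have hd : Dense (TF.domain : Set H) := hsa.dense_domain
  have h := hsa
  rw [LinearPMap.isSelfAdjoint_def] at h
  have key : ∀ z : TF.domain, (inner ℝ w ((z : H)) : ℝ) = inner ℝ x (TF z) := by
    intro z
    have h1 : Tendsto (fun k => (inner ℝ (TF (v k)) ((z : H)) : ℝ)) atTop (𝓝 (inner ℝ w (z : H))) :=
      hw.inner tendsto_const_nhds
    have h2 : Tendsto (fun k => (inner ℝ ((v k : H)) (TF z) : ℝ)) atTop (𝓝 (inner ℝ x (TF z))) :=
      hx.inner tendsto_const_nhds
    have h3 : (fun k => (inner ℝ (TF (v k)) ((z : H)) : ℝ))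
        = fun k => (inner ℝ ((v k : H)) (TF z) : ℝ) := funext fun k => sa_symm hsa (v k) z
    rw [h3] at h1
    exact tendsto_nhds_unique h1 h2
  have hmem : x ∈ TF†.domain :=
    LinearPMap.mem_adjoint_domain_of_exists x ⟨w, fun z => key z⟩
  have hmem' : x ∈ TF.domain := h ▸ hmem
  refine ⟨⟨x, hmem'⟩, rfl, ?_⟩
  have happ : TF† ⟨x, hmem⟩ = w := LinearPMap.adjoint_apply_eq hd _ (fun z => key z)
  have hle : TF† ≤ TF := le_of_eq h
  have := hle.2 (x := ⟨x, hmem⟩) (y := ⟨x, hmem'⟩) rfl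
  rw [← this, happ]

/-- If `⟪w, z⟫ = ⟪y, TF z⟫` for all `z`, then `y ∈ D(TF)` and `TF y = w`. -/
private lemma sa_mem_of_inner {TF : H →ₗ.[ℝ] H} (hsa : IsSelfAdjoint TF) {y w : H}
    (key : ∀ z : TF.domain, (inner ℝ w ((z : H)) : ℝ) = inner ℝ y (TF z)) :
    ∃ y' : TF.domain, (y' : H) = y ∧ TF y' = w := by
  have hd : Dense (TF.domain : Set H) := hsa.dense_domain
  have h := hsa
  rw [LinearPMap.isSelfAdjoint_def] at h
  have hmem : y ∈ TF†.domain :=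
    LinearPMap.mem_adjoint_domain_of_exists y ⟨w, fun z => key z⟩
  have hmem' : y ∈ TF.domain := h ▸ hmem
  refine ⟨⟨y, hmem'⟩, rfl, ?_⟩
  have happ : TF† ⟨y, hmem⟩ = w := LinearPMap.adjoint_apply_eq hd _ (fun z => key z)
  have hle : TF† ≤ TF := le_of_eq h
  have := hle.2 (x := ⟨y, hmem⟩) (y := ⟨y, hmem'⟩) rfl
  rw [← this, happ]

/-- The shifted operator as a linear map on the domain. -/
private noncomputable def Slin (TF : H →ₗ.[ℝ] H) (lam : ℝ) : TF.domain →ₗ[ℝ] H :=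
  TF.toFun - lam • TF.domain.subtype

private lemma Slin_apply {TF : H →ₗ.[ℝ] H} {lam : ℝ} (v : TF.domain) :
    Slin TF lam v = TF v - lam • (v : H) := by
  simp [Slin]

private lemma Slin_coercive {TF : H →ₗ.[ℝ] H} {μ lam : ℝ}
    (hform : ∀ v : TF.domain, μ * ‖(v : H)‖ ^ 2 ≤ inner ℝ (TF v) ((v : H)))
    (hlt : lam < μ) (v : TF.domain) : (μ - lam) * ‖(v : H)‖ ≤ ‖Slin TF lam v‖ := by
  have h1 : (μ - lam) * ‖(v : H)‖ ^ 2 ≤ inner ℝ (Slin TF lam v) ((v : H)) := by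
    rw [Slin_apply, inner_sub_left, real_inner_smul_left, real_inner_self_eq_norm_sq]
    have := hform v
    linarith
  have h2 : (inner ℝ (Slin TF lam v) ((v : H)) : ℝ) ≤ ‖Slin TF lam v‖ * ‖(v : H)‖ :=
    real_inner_le_norm _ _
  rcases eq_or_lt_of_le (norm_nonneg ((v : H))) with h0 | h0
  · rw [← h0, mul_zero]
    exact norm_nonneg _
  · have := h1.trans h2
    rw [sq] at this
    nlinarith

private lemma Slin_bijective {TF : H →ₗ.[ℝ] H} {μ lam : ℝ} (hsa : IsSelfAdjoint TF)
    (hform : ∀ v : TF.domain, μ * ‖(v : H)‖ ^ 2 ≤ inner ℝ (TF v) ((v : H)))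
    (hlt : lam < μ) : Function.Bijective (Slin TF lam) := by
  have hpos : 0 < μ - lam := by linarith
  constructor
  · intro v w hvw
    have h0 : Slin TF lam (v - w) = 0 := by rw [LinearMap.map_sub, hvw, sub_self]
    have := Slin_coercive hform hlt (v - w)
    rw [h0, norm_zero] at this
    have hn : ‖((v - w : TF.domain) : H)‖ = 0 := by
      have h1 : ‖((v - w : TF.domain) : H)‖ ≤ 0 := by
        nlinarith [norm_nonneg ((v - w : TF.domain) : H)]
      exact le_antisymm h1 (norm_nonneg _)
    have : ((v : H)) = ((w : H)) := by
      have := norm_eq_zero.mp hn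
      rw [Submodule.coe_sub] at this
      exact sub_eq_zero.mp this
    exact Subtype.ext this
  · -- surjectivity
    set K : Submodule ℝ H := LinearMap.range (Slin TF lam) with hK
    have hKclosed : IsClosed (K : Set H) := by
      apply IsSeqClosed.isClosed
      intro yseq y hmem hy
      choose vk hvk using hmem
      have hcauchy : CauchySeq (fun k => ((vk k : H))) := by
        rw [Metric.cauchySeq_iff]
        intro ε hε
        have hy' : CauchySeq yseq := hy.cauchySeq
        rw [Metric.cauchySeq_iff] at hy'
        obtain ⟨N, hN⟩ := hy' ((μ - lam) * ε) (by positivity)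
        refine ⟨N, fun m hm n hn => ?_⟩
        have hc := Slin_coercive hform hlt (vk m - vk n)
        have hSd : Slin TF lam (vk m - vk n) = yseq m - yseq n := by
          rw [LinearMap.map_sub, hvk, hvk]
        rw [hSd] at hc
        have hd : dist ((vk m : H)) ((vk n : H)) = ‖((vk m - vk n : TF.domain) : H)‖ := by
          rw [dist_eq_norm, Submodule.coe_sub]
        rw [hd]
        have h2 := hN m hm n hn
        rw [dist_eq_norm] at h2
        nlinarith [norm_nonneg ((vk m - vk n : TF.domain) : H)]
      obtain ⟨x, hx⟩ := cauchySeq_tendsto_of_complete hcauchy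
      have hTF : Tendsto (fun k => TF (vk k)) atTop (𝓝 (y + lam • x)) := by
        have : (fun k => TF (vk k)) = fun k => yseq k + lam • ((vk k : H)) := by
          funext k
          have := Slin_apply (TF := TF) (lam := lam) (vk k)
          rw [hvk k] at this
          rw [this]; abel
        rw [this]
        exact hy.add (hx.const_smul lam)
      obtain ⟨x', hx'1, hx'2⟩ := sa_closed hsa vk hx hTF
      refine ⟨x', ?_⟩
      rw [Slin_apply, hx'2, hx'1]
      abel
    haveI : CompleteSpace K := hKclosed.completeSpace_coe
    have hKtop : K = ⊤ := by
      rw [← Submodule.orthogonal_eq_bot_iff]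
      rw [Submodule.eq_bot_iff]
      intro y hy
      rw [Submodule.mem_orthogonal] at hy
      have key : ∀ z : TF.domain, (inner ℝ (lam • y) ((z : H)) : ℝ) = inner ℝ y (TF z) := by
        intro z
        have h0 : (inner ℝ (Slin TF lam z) y : ℝ) = 0 := hy _ ⟨z, rfl⟩
        rw [Slin_apply, inner_sub_left, real_inner_smul_left] at h0
        rw [real_inner_smul_left]
        have e1 := real_inner_comm ((TF z : H)) y
        have e2 := real_inner_comm ((z : H)) y
        linear_combination lam * e2 - e1 - h0
      obtain ⟨y', hy'1, hy'2⟩ := sa_mem_of_inner hsa key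
      have := hform y'
      rw [hy'2, hy'1, real_inner_smul_left, real_inner_self_eq_norm_sq] at this
      have h2 : ‖y‖ ^ 2 ≤ 0 := by nlinarith
      have h3 : ‖y‖ ^ 2 = 0 := le_antisymm h2 (sq_nonneg _)
      have h4 : ‖y‖ = 0 := by
        have := pow_eq_zero_iff (n := 2) two_ne_zero |>.mp h3
        exact this
      rwa [norm_eq_zero] at h4
    intro y
    have : y ∈ K := by rw [hKtop]; trivial
    exact this

private lemma Slin_not_bijective {TF : H →ₗ.[ℝ] H} {μ : ℝ} (hsa : IsSelfAdjoint TF)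
    (hform : ∀ v : TF.domain, μ * ‖(v : H)‖ ^ 2 ≤ inner ℝ (TF v) ((v : H)))
    (hnear : ∀ δ > (0 : ℝ), ∃ v : TF.domain, (v : H) ≠ 0 ∧
      (inner ℝ (TF v) ((v : H)) : ℝ) < (μ + δ) * ‖(v : H)‖ ^ 2) :
    ¬ Function.Bijective (Slin TF μ) := by
  intro hbij
  set e := LinearEquiv.ofBijective (Slin TF μ) hbij with he
  set R : H →ₗ[ℝ] H := (TF.domain.subtype).comp e.symm.toLinearMap with hR
  have hRapp : ∀ y : H, R y = ((e.symm y : TF.domain) : H) := fun y => rfl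
  have hSe : ∀ y : H, Slin TF μ (e.symm y) = y := by
    intro y
    have := e.apply_symm_apply y
    rwa [he, LinearEquiv.ofBijective_apply] at this
  -- closed graph
  have hgraph : IsClosed (R.graph : Set (H × H)) := by
    apply IsSeqClosed.isClosed
    intro pseq p hmem hp
    have hp1 : Tendsto (fun k => (pseq k).1) atTop (𝓝 p.1) := (continuous_fst.tendsto p).comp hp
    have hp2 : Tendsto (fun k => (pseq k).2) atTop (𝓝 p.2) := (continuous_snd.tendsto p).comp hp
    set vk : ℕ → TF.domain := fun k => e.symm ((pseq k).1) with hvk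
    have hmem' : ∀ k, (pseq k).2 = ((vk k : TF.domain) : H) := by
      intro k
      have := (LinearMap.mem_graph_iff R (pseq k)).mp (hmem k)
      rw [this, hRapp]
    have hx : Tendsto (fun k => ((vk k : TF.domain) : H)) atTop (𝓝 p.2) := by
      refine hp2.congr (fun k => (hmem' k))
    have hTFvk : ∀ k, TF (vk k) = (pseq k).1 + μ • ((vk k : TF.domain) : H) := by
      intro k
      have h1 : (pseq k).1 = TF (vk k) - μ • ((vk k : TF.domain) : H) := by
        rw [← Slin_apply (TF := TF) (lam := μ) (vk k)]
        exact (hSe ((pseq k).1)).symm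
      rw [h1]; abel
    have hw : Tendsto (fun k => TF (vk k)) atTop (𝓝 (p.1 + μ • p.2)) := by
      have : (fun k => TF (vk k)) = fun k => (pseq k).1 + μ • ((vk k : TF.domain) : H) :=
        funext hTFvk
      rw [this]
      exact hp1.add (hx.const_smul μ)
    obtain ⟨x', hx'1, hx'2⟩ := sa_closed hsa vk hx hw
    have hSx' : Slin TF μ x' = p.1 := by
      rw [Slin_apply, hx'2, hx'1]; abel
    have hsymmp : e.symm p.1 = x' := by
      rw [LinearEquiv.symm_apply_eq, he, LinearEquiv.ofBijective_apply, hSx']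
    show p ∈ R.graph
    rw [LinearMap.mem_graph_iff, hRapp, hsymmp, hx'1]
  have hRcont : Continuous R := R.continuous_of_isClosed_graph hgraph
  set Rc : H →L[ℝ] H := ⟨R, hRcont⟩ with hRc
  set Cop := ‖Rc‖ with hCop
  have hCop0 : 0 ≤ Cop := norm_nonneg _
  -- positivity and symmetry of R
  have hinner : ∀ y : H, (inner ℝ (R y) y : ℝ)
      = inner ℝ ((e.symm y : TF.domain) : H) (TF (e.symm y))
        - μ * ‖((e.symm y : TF.domain) : H)‖ ^ 2 := by
    intro y
    calc (inner ℝ (R y) y : ℝ)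
        = inner ℝ ((e.symm y : TF.domain) : H) (Slin TF μ (e.symm y)) := by rw [hRapp, hSe]
      _ = _ := by
          rw [Slin_apply, inner_sub_right, real_inner_smul_right, real_inner_self_eq_norm_sq]
  have hpos : ∀ y : H, 0 ≤ (inner ℝ (R y) y : ℝ) := by
    intro y
    rw [hinner]
    have h1 := hform (e.symm y)
    have h2 := real_inner_comm ((TF (e.symm y) : H)) ((e.symm y : TF.domain) : H)
    linarith [h1, h2.symm ▸ h1]
  have hsymmR : ∀ a b : H, (inner ℝ (R a) b : ℝ) = inner ℝ a (R b) := by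
    intro a b
    conv_lhs => rw [← hSe b]
    conv_rhs => rw [← hSe a]
    rw [hRapp, hRapp]
    rw [Slin_apply, Slin_apply, inner_sub_right, inner_sub_left,
      real_inner_smul_right, real_inner_smul_left]
    rw [sa_symm hsa (e.symm a) (e.symm b)]
  -- Cauchy-Schwarz for the form (a,b) ↦ ⟪R a, b⟫
  have hCS : ∀ a b : H, (inner ℝ (R a) b : ℝ) ^ 2 ≤ (inner ℝ (R a) a : ℝ) * (inner ℝ (R b) b : ℝ) := by
    intro a b
    apply cs_of_quadratic
    intro t
    have h0 := hpos (a + t • b)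
    have hexp : (inner ℝ (R (a + t • b)) (a + t • b) : ℝ)
        = inner ℝ (R a) a + 2 * t * inner ℝ (R a) b + t ^ 2 * inner ℝ (R b) b := by
      rw [R.map_add, R.map_smul, inner_add_left, inner_add_right, inner_add_right,
        real_inner_smul_left, real_inner_smul_right, real_inner_smul_left,
        real_inner_smul_right]
      have h1 := hsymmR b a
      have h2 := real_inner_comm ((b : H)) (R a)
      linear_combination t * h1 - t * h2
    rw [hexp] at h0
    exact h0
  -- the contradiction
  set δ : ℝ := 1 / (Cop + 1) with hδ
  have hδpos : 0 < δ := by positivity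
  obtain ⟨v, hv0, hvlt⟩ := hnear δ hδpos
  have hvpos : 0 < ‖(v : H)‖ := norm_pos_iff.mpr hv0
  set y := Slin TF μ v with hy
  have hesymm : e.symm y = v := by
    rw [LinearEquiv.symm_apply_eq, he, LinearEquiv.ofBijective_apply]
  have hRy : R y = (v : H) := by rw [hRapp, hesymm]
  have hs11 : (inner ℝ (R y) y : ℝ) < δ * ‖(v : H)‖ ^ 2 := by
    rw [hinner, hesymm]
    have := real_inner_comm ((TF v : H)) ((v : H))
    nlinarith [hvlt]
  have hs11nn : 0 ≤ (inner ℝ (R y) y : ℝ) := hpos y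
  have hsbb : (inner ℝ (R ((v : H))) ((v : H)) : ℝ) ≤ Cop * ‖(v : H)‖ ^ 2 := by
    have h1 : (inner ℝ (R ((v : H))) ((v : H)) : ℝ) ≤ ‖R ((v : H))‖ * ‖(v : H)‖ :=
      real_inner_le_norm _ _
    have h2 : ‖R ((v : H))‖ ≤ Cop * ‖(v : H)‖ := Rc.le_opNorm ((v : H))
    nlinarith [norm_nonneg ((v : H))]
  have hkey := hCS y ((v : H))
  have h4 : (inner ℝ (R y) ((v : H)) : ℝ) = ‖(v : H)‖ ^ 2 := by
    rw [hRy, real_inner_self_eq_norm_sq]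
  rw [h4] at hkey
  have hsbbnn : 0 ≤ (inner ℝ (R ((v : H))) ((v : H)) : ℝ) := hpos _
  have p1 : (inner ℝ (R y) y : ℝ) * (inner ℝ (R ((v : H))) ((v : H)) : ℝ)
      ≤ (inner ℝ (R y) y : ℝ) * (Cop * ‖(v : H)‖ ^ 2) := mul_le_mul_of_nonneg_left hsbb hs11nn
  have p2 : (inner ℝ (R y) y : ℝ) * (Cop * ‖(v : H)‖ ^ 2)
      ≤ (δ * ‖(v : H)‖ ^ 2) * (Cop * ‖(v : H)‖ ^ 2) :=
    mul_le_mul_of_nonneg_right (le_of_lt hs11) (by positivity)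
  have hδC : δ * (Cop + 1) = 1 := by
    rw [hδ]; field_simp
  nlinarith [pow_pos hvpos 4, sq_nonneg (‖(v : H)‖)]

private lemma form_lower_bound {T TF : H →ₗ.[ℝ] H} {c : ℝ} (hdense : Dense (T.domain : Set H))
    (hsymm : ∀ u v : T.domain, (inner ℝ (T u) ((v : H)) : ℝ) = (inner ℝ ((u : H)) (T v) : ℝ))
    (hbd : ∀ v : T.domain, c * ‖(v : H)‖ ^ 2 ≤ (inner ℝ (T v) ((v : H)) : ℝ))
    (hsub : TF.domain ≤ T.adjoint.domain)
    (hagree : ∀ v : TF.domain, ∀ w : T.adjoint.domain, (v : H) = (w : H) →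
      TF v = T.adjoint w)
    {μ : ℝ} (hμ : ∀ x : T.domain, μ * ‖(x : H)‖ ^ 2 ≤ (inner ℝ (T x) ((x : H)) : ℝ))
    (v : TF.domain) (u : ℕ → T.domain)
    (huconv : Tendsto (fun n => ((u n : H))) atTop (𝓝 (v : H)))
    (hucauchy : ∀ ε > (0:ℝ), ∃ N, ∀ m ≥ N, ∀ n ≥ N,
      (inner ℝ (T (u m - u n)) ((u m : H) - (u n : H)) : ℝ)
        + (1 - c) * ‖(u m : H) - (u n : H)‖ ^ 2 < ε) :
    μ * ‖(v : H)‖ ^ 2 ≤ (inner ℝ (TF v) ((v : H)) : ℝ) := by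
  classical
  -- the quadratic form B
  set B : T.domain → T.domain → ℝ :=
    fun x y => (inner ℝ (T x) ((y : H)) : ℝ) + (1 - c) * (inner ℝ ((x : H)) ((y : H)) : ℝ) with hB
  have hBself : ∀ x : T.domain, ‖(x : H)‖ ^ 2 ≤ B x x := by
    intro x
    have h1 := hbd x
    have h2 : (inner ℝ ((x : H)) ((x : H)) : ℝ) = ‖(x : H)‖ ^ 2 := real_inner_self_eq_norm_sq _
    simp only [hB]
    rw [h2]
    linarith
  have hBnonneg : ∀ x : T.domain, 0 ≤ B x x := fun x =>
    le_trans (sq_nonneg _) (hBself x)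
  have hBexp : ∀ x y : T.domain, ∀ t : ℝ,
      B (x + t • y) (x + t • y) = B x x + 2 * t * B x y + t ^ 2 * B y y := by
    intro x y t
    simp only [hB, LinearPMap.map_add, LinearPMap.map_smul, Submodule.coe_add,
      Submodule.coe_smul_of_tower, inner_add_left, inner_add_right,
      real_inner_smul_left, real_inner_smul_right]
    have h1 := hsymm y x
    have h2 := real_inner_comm ((y : H)) ((x : H))
    have h3 := real_inner_comm ((y : H)) (T x)
    linear_combination t * h1 - t * h3 - (1 - c) * t * h2
  have hBCS : ∀ x y : T.domain, (B x y) ^ 2 ≤ B x x * B y y := by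
    intro x y
    apply cs_of_quadratic
    intro t
    rw [← hBexp x y t]
    exact hBnonneg _
  -- the Cauchy property in terms of B
  have hBc : ∀ ε > (0:ℝ), ∃ N, ∀ m ≥ N, ∀ n ≥ N, B (u m - u n) (u m - u n) < ε := by
    intro ε hε
    obtain ⟨N, hN⟩ := hucauchy ε hε
    refine ⟨N, fun m hm n hn => ?_⟩
    have := hN m hm n hn
    have hcoe : ((u m - u n : T.domain) : H) = (u m : H) - (u n : H) := rfl
    simp only [hB, hcoe]
    have h2 : (inner ℝ ((u m : H) - (u n : H)) ((u m : H) - (u n : H)) : ℝ)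
        = ‖(u m : H) - (u n : H)‖ ^ 2 := real_inner_self_eq_norm_sq _
    rw [h2]
    exact this
  -- bound on norms
  have hnorm : Tendsto (fun n => ‖(u n : H)‖) atTop (𝓝 ‖(v : H)‖) := huconv.norm
  obtain ⟨K, hK⟩ := hnorm.bddAbove_range
  rw [mem_upperBounds] at hK
  have hKn : ∀ n, ‖(u n : H)‖ ≤ K := fun n => hK _ (Set.mem_range_self n)
  have hK0 : 0 ≤ K := le_trans (norm_nonneg _) (hKn 0)
  -- bound on B (u n) (u n)
  obtain ⟨N₁, hN₁⟩ := hBc 1 one_pos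
  set b : ℕ → ℝ := fun n => B (u n) (u n) with hb
  have hbbd : ∃ M, (0:ℝ) ≤ M ∧ ∀ n, b n ≤ M := by
    have hupper : ∀ n ≥ N₁, b n ≤ 2 * b N₁ + 2 := by
      intro n hn
      have hdd := hN₁ n hn N₁ le_rfl
      -- parallelogram-type inequality : b n = B(u N₁ + (u n - u N₁)) ≤ 2 b N₁ + 2 B d d
      have hsum : B (u N₁ + (1:ℝ) • (u n - u N₁)) (u N₁ + (1:ℝ) • (u n - u N₁))
          = b N₁ + 2 * 1 * B (u N₁) (u n - u N₁) + 1 ^ 2 * B (u n - u N₁) (u n - u N₁) :=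
        hBexp _ _ 1
      have hdiff := hBexp (u N₁) (u n - u N₁) (-1)
      have hpos2 := hBnonneg (u N₁ + (-1:ℝ) • (u n - u N₁))
      rw [hdiff] at hpos2
      have heq : u N₁ + (1:ℝ) • (u n - u N₁) = u n := by
        rw [one_smul]; abel
      rw [heq] at hsum
      have hswap : B (u n - u N₁) (u n - u N₁) < 1 := hdd
      nlinarith [hsum, hswap, hpos2]
    set M2 := (Finset.range (N₁ + 1)).sup' (by simp) b with hM2
    refine ⟨max (2 * b N₁ + 2) M2 + 1, ?_, ?_⟩
    · have : 0 ≤ b N₁ := hBnonneg _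
      have h1 : 2 * b N₁ + 2 ≤ max (2 * b N₁ + 2) M2 := le_max_left _ _
      nlinarith
    · intro n
      rcases le_or_gt N₁ n with h | h
      · have := hupper n h
        have h1 : 2 * b N₁ + 2 ≤ max (2 * b N₁ + 2) M2 := le_max_left _ _
        linarith
      · have hmem : n ∈ Finset.range (N₁ + 1) := Finset.mem_range.mpr (by omega)
        have := Finset.le_sup' b hmem
        have h1 : M2 ≤ max (2 * b N₁ + 2) M2 := le_max_right _ _
        rw [hM2] at h1 ⊢
        linarith
  obtain ⟨M, hM0, hM⟩ := hbbd
  -- identification of ⟪TF v, u n⟫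
  have hTv : TF v = T.adjoint ⟨(v : H), hsub v.2⟩ := hagree v _ rfl
  have hg : ∀ n, (inner ℝ (TF v) ((u n : H)) : ℝ) = inner ℝ ((v : H)) (T (u n)) := by
    intro n
    rw [hTv]
    exact LinearPMap.adjoint_isFormalAdjoint hdense ⟨(v : H), hsub v.2⟩ (u n)
  have hglim : Tendsto (fun n => (inner ℝ (TF v) ((u n : H)) : ℝ)) atTop
      (𝓝 (inner ℝ (TF v) ((v : H)))) := tendsto_const_nhds.inner huconv
  have hglim' : Tendsto (fun n => (inner ℝ ((v : H)) (T (u n)) : ℝ)) atTop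
      (𝓝 (inner ℝ (TF v) ((v : H)))) := by
    refine hglim.congr (fun n => hg n)
  -- the constant C
  set C : ℝ := Real.sqrt M + |1 - c| * K + 1 with hC
  have hC0 : 0 < C := by positivity
  -- the key estimate
  have hkey : ∀ ε > (0:ℝ), ∀ᶠ n in atTop,
      μ * ‖(u n : H)‖ ^ 2 - Real.sqrt ε * C ≤ (inner ℝ ((v : H)) (T (u n)) : ℝ) := by
    intro ε hε
    obtain ⟨N, hN⟩ := hBc ε hε
    rw [eventually_atTop]
    refine ⟨N, fun n hn => ?_⟩
    -- bound |⟪v - u n, T (u n)⟫| ≤ √ε * C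
    have hphi : Tendsto (fun m => (inner ℝ ((u m : H) - (u n : H)) (T (u n)) : ℝ)) atTop
        (𝓝 (inner ℝ ((v : H) - (u n : H)) (T (u n)))) :=
      ((huconv.sub tendsto_const_nhds).inner tendsto_const_nhds)
    have hbound : ∀ m ≥ N, |(inner ℝ ((u m : H) - (u n : H)) (T (u n)) : ℝ)| ≤ Real.sqrt ε * C := by
      intro m hm
      set d : T.domain := u m - u n with hd
      have hdd : B d d < ε := hN m hm n hn
      have hdd0 : 0 ≤ B d d := hBnonneg d
      -- ⟪d, T (u n)⟫ = B d (u n) - (1 - c) ⟪d, u n⟫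
      have hsplit : (inner ℝ ((d : H)) (T (u n)) : ℝ)
          = B d (u n) - (1 - c) * (inner ℝ ((d : H)) ((u n : H)) : ℝ) := by
        simp only [hB]
        have := hsymm d (u n)
        linarith
      have hBd : |B d (u n)| ≤ Real.sqrt ε * Real.sqrt M := by
        have h1 : (B d (u n)) ^ 2 ≤ B d d * B (u n) (u n) := hBCS d (u n)
        have h2 : B d d * B (u n) (u n) ≤ ε * M := by
          apply mul_le_mul (le_of_lt hdd) (hM n) (hBnonneg _) (le_of_lt hε)
        have h3 : (B d (u n)) ^ 2 ≤ ε * M := le_trans h1 h2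
        have h4 : |B d (u n)| = Real.sqrt ((B d (u n)) ^ 2) := (Real.sqrt_sq_eq_abs _).symm
        rw [h4, ← Real.sqrt_mul (le_of_lt hε)]
        exact Real.sqrt_le_sqrt h3
      have hnd : ‖(d : H)‖ ≤ Real.sqrt ε := by
        have h1 : ‖(d : H)‖ ^ 2 ≤ ε := le_trans (hBself d) (le_of_lt hdd)
        have := Real.sqrt_le_sqrt h1
        rwa [Real.sqrt_sq (norm_nonneg _)] at this
      have hid : |(1 - c) * (inner ℝ ((d : H)) ((u n : H)) : ℝ)| ≤ |1 - c| * (Real.sqrt ε * K) := by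
        rw [abs_mul]
        apply mul_le_mul_of_nonneg_left _ (abs_nonneg _)
        calc |(inner ℝ ((d : H)) ((u n : H)) : ℝ)| ≤ ‖(d : H)‖ * ‖(u n : H)‖ := abs_real_inner_le_norm _ _
          _ ≤ Real.sqrt ε * K := by
              apply mul_le_mul hnd (hKn n) (norm_nonneg _) (Real.sqrt_nonneg _)
      show |(inner ℝ ((d : H)) (T (u n)) : ℝ)| ≤ Real.sqrt ε * C
      rw [hsplit]
      have habs : |B d (u n) - (1 - c) * (inner ℝ ((d : H)) ((u n : H)) : ℝ)|
          ≤ |B d (u n)| + |(1 - c) * (inner ℝ ((d : H)) ((u n : H)) : ℝ)| := abs_sub _ _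
      have hsqε : 0 ≤ Real.sqrt ε := Real.sqrt_nonneg _
      calc |B d (u n) - (1 - c) * (inner ℝ ((d : H)) ((u n : H)) : ℝ)|
          ≤ Real.sqrt ε * Real.sqrt M + |1 - c| * (Real.sqrt ε * K) := by
            refine le_trans habs ?_
            exact add_le_add hBd hid
        _ ≤ Real.sqrt ε * C := by rw [hC]; ring_nf; nlinarith [abs_nonneg (1 - c), Real.sqrt_nonneg M, hsqε, hK0]
    have hlimb : |(inner ℝ ((v : H) - (u n : H)) (T (u n)) : ℝ)| ≤ Real.sqrt ε * C := by
      apply le_of_tendsto hphi.abs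
      rw [eventually_atTop]
      exact ⟨N, fun m hm => hbound m hm⟩
    -- now conclude
    have hsplit2 : (inner ℝ ((v : H)) (T (u n)) : ℝ)
        = inner ℝ ((v : H) - (u n : H)) (T (u n)) + inner ℝ ((u n : H)) (T (u n)) := by
      rw [inner_sub_left]; ring
    have hun : μ * ‖(u n : H)‖ ^ 2 ≤ (inner ℝ ((u n : H)) (T (u n)) : ℝ) := by
      have h1 := hμ (u n)
      have h2 := real_inner_comm ((T (u n) : H)) ((u n : H))
      linarith
    have h3 : -(Real.sqrt ε * C) ≤ (inner ℝ ((v : H) - (u n : H)) (T (u n)) : ℝ) :=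
      neg_le_of_abs_le hlimb
    linarith [hsplit2, hun, h3]
  -- pass to the limit
  have hXlim : ∀ ε > (0:ℝ),
      μ * ‖(v : H)‖ ^ 2 - Real.sqrt ε * C ≤ (inner ℝ (TF v) ((v : H)) : ℝ) := by
    intro ε hε
    have hseq : Tendsto (fun n => μ * ‖(u n : H)‖ ^ 2 - Real.sqrt ε * C) atTop
        (𝓝 (μ * ‖(v : H)‖ ^ 2 - Real.sqrt ε * C)) := by
      have := (hnorm.pow 2).const_mul μ
      exact this.sub tendsto_const_nhds
    exact le_of_tendsto_of_tendsto hseq hglim' (hkey ε hε)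
  -- conclude by letting ε → 0
  by_contra hcon
  push_neg at hcon
  set X : ℝ := (inner ℝ (TF v) ((v : H)) : ℝ) - μ * ‖(v : H)‖ ^ 2 with hXdef
  have hXneg : X < 0 := by simp only [hXdef]; linarith
  have hdivneg : X / (2 * C) < 0 := div_neg_of_neg_of_pos hXneg (by linarith)
  have hεpos : 0 < (X / (2 * C)) ^ 2 := by
    have hne : (X / (2 * C)) ^ 2 ≠ 0 := pow_ne_zero 2 (ne_of_lt hdivneg)
    exact lt_of_le_of_ne (sq_nonneg _) (Ne.symm hne)
  have h1 := hXlim ((X / (2 * C)) ^ 2) hεpos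
  have hsq : Real.sqrt ((X / (2 * C)) ^ 2) = -(X / (2 * C)) := by
    rw [Real.sqrt_sq_eq_abs, abs_of_neg hdivneg]
  rw [hsq] at h1
  have hCne : C ≠ 0 := ne_of_gt hC0
  have h2 : -(-(X / (2 * C)) * C) = X / 2 := by field_simp
  have h3 : X / 2 ≤ X := by
    have := h1
    simp only [hXdef] at *
    nlinarith [h1, h2]
  linarith

end Auxiliary


/-- the bottom of the spectrum of the Friedrichs extension `T^F` of a densely
defined, symmetric, bounded-below operator `T` equals the infimum of the Rayleigh quotients
`⟨Tv, v⟩ / ‖v‖²` over nonzero `v ∈ D(T)`. -/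
theorem stmt2 {H : Type*} [NormedAddCommGroup H] [InnerProductSpace ℝ H]
    [CompleteSpace H] [TopologicalSpace.SeparableSpace H]
    (T TF : H →ₗ.[ℝ] H) (hdense : Dense (T.domain : Set H))
    (hsymm : ∀ u v : T.domain, (inner ℝ (T u) ((v : H)) : ℝ) = (inner ℝ ((u : H)) (T v) : ℝ))
    (c : ℝ) (hbd : ∀ v : T.domain, c * ‖(v : H)‖ ^ 2 ≤ (inner ℝ (T v) ((v : H)) : ℝ))
    (hF : IsFriedrichsExtension T TF c) :
    sInf TF.paperSpectrum
      = sInf {r : ℝ | ∃ v : T.domain, (v : H) ≠ 0 ∧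
          r = (inner ℝ (T v) ((v : H)) : ℝ) / ‖(v : H)‖ ^ 2} := by
  classical
  by_cases hdeg : ∀ v : T.domain, (v : H) = 0
  · -- degenerate case : `H` is trivial
    have hsub : ∀ x : H, x = 0 := by
      intro x
      have h1 : (T.domain : Set H) ⊆ {0} := by
        intro z hz
        exact hdeg ⟨z, hz⟩
      have h2 : closure (T.domain : Set H) ⊆ {0} := by
        rw [← (isClosed_singleton (x := (0:H))).closure_eq]
        exact closure_mono h1
      rw [hdense.closure_eq] at h2
      exact h2 (Set.mem_univ x)
    have hspec : TF.paperSpectrum = ∅ := by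
      rw [Set.eq_empty_iff_forall_notMem]
      intro l hl
      apply hl
      constructor
      · intro a b _
        exact Subtype.ext ((hsub _).trans (hsub _).symm)
      · intro y
        exact ⟨0, ((hsub _).trans (hsub y).symm)⟩
    have hray : {r : ℝ | ∃ v : T.domain, (v : H) ≠ 0 ∧
        r = (inner ℝ (T v) ((v : H)) : ℝ) / ‖(v : H)‖ ^ 2} = ∅ := by
      rw [Set.eq_empty_iff_forall_notMem]
      rintro r ⟨v, hv, -⟩
      exact hv (hdeg v)
    rw [hspec, hray]
  · -- main case
    push_neg at hdeg
    obtain ⟨v₀, hv₀⟩ := hdeg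
    set Rset := {r : ℝ | ∃ v : T.domain, (v : H) ≠ 0 ∧
        r = (inner ℝ (T v) ((v : H)) : ℝ) / ‖(v : H)‖ ^ 2} with hRset
    set μ := sInf Rset with hμdef
    have hRne : Rset.Nonempty :=
      ⟨(inner ℝ (T v₀) ((v₀ : H)) : ℝ) / ‖(v₀ : H)‖ ^ 2, v₀, hv₀, rfl⟩
    have hRbd : BddBelow Rset := by
      refine ⟨c, ?_⟩
      rintro r ⟨v, hv, rfl⟩
      have hpos : (0:ℝ) < ‖(v : H)‖ ^ 2 := pow_pos (norm_pos_iff.mpr hv) 2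
      rw [le_div_iff₀ hpos]
      exact hbd v
    have hμle : ∀ x : T.domain, μ * ‖(x : H)‖ ^ 2 ≤ (inner ℝ (T x) ((x : H)) : ℝ) := by
      intro x
      by_cases hx : (x : H) = 0
      · have hx0 : x = 0 := Subtype.ext hx
        rw [hx, hx0]
        simp
      · have hpos : (0:ℝ) < ‖(x : H)‖ ^ 2 := pow_pos (norm_pos_iff.mpr hx) 2
        have h1 : μ ≤ (inner ℝ (T x) ((x : H)) : ℝ) / ‖(x : H)‖ ^ 2 :=
          csInf_le hRbd ⟨x, hx, rfl⟩
        calc μ * ‖(x : H)‖ ^ 2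
            ≤ ((inner ℝ (T x) ((x : H)) : ℝ) / ‖(x : H)‖ ^ 2) * ‖(x : H)‖ ^ 2 :=
              mul_le_mul_of_nonneg_right h1 (le_of_lt hpos)
          _ = (inner ℝ (T x) ((x : H)) : ℝ) := div_mul_cancel₀ _ (ne_of_gt hpos)
    -- the form bound on the Friedrichs extension
    have hformA : ∀ w : TF.domain, μ * ‖(w : H)‖ ^ 2 ≤ (inner ℝ (TF w) ((w : H)) : ℝ) := by
      intro w
      obtain ⟨u, huconv, hucauchy⟩ := hF.domain_in_form_closure w
      exact form_lower_bound hdense hsymm hbd hF.domain_sub_adjoint hF.agrees_with_adjoint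
        hμle w u huconv hucauchy
    -- near-minimizers in the domain of TF
    have hnear : ∀ δ > (0 : ℝ), ∃ v : TF.domain, (v : H) ≠ 0 ∧
        (inner ℝ (TF v) ((v : H)) : ℝ) < (μ + δ) * ‖(v : H)‖ ^ 2 := by
      intro δ hδ
      obtain ⟨r, hrmem, hrlt⟩ := exists_lt_of_csInf_lt hRne (show sInf Rset < μ + δ by
        rw [← hμdef]; linarith)
      obtain ⟨x, hx, rfl⟩ := hrmem
      have hpos : (0:ℝ) < ‖(x : H)‖ ^ 2 := pow_pos (norm_pos_iff.mpr hx) 2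
      refine ⟨⟨(x : H), hF.le.1 x.2⟩, hx, ?_⟩
      have hTeq : T x = TF ⟨(x : H), hF.le.1 x.2⟩ := hF.le.2 rfl
      have h2 : (inner ℝ (T x) ((x : H)) : ℝ) < (μ + δ) * ‖(x : H)‖ ^ 2 := by
        rw [div_lt_iff₀ hpos] at hrlt
        exact hrlt
      rw [← hTeq]
      exact h2
    -- the spectrum is exactly bounded below by μ
    have hfun : ∀ l : ℝ, (fun v : TF.domain => TF v - l • (v : H)) = ⇑(Slin TF l) := by
      intro l
      funext v
      rw [Slin_apply]
    have hnotmem : ∀ l : ℝ, l < μ → l ∉ TF.paperSpectrum := by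
      intro l hl hmem
      apply hmem
      rw [hfun l]
      exact Slin_bijective hF.selfAdjoint hformA hl
    have hμmem : μ ∈ TF.paperSpectrum := by
      show ¬ Function.Bijective _
      rw [hfun μ]
      exact Slin_not_bijective hF.selfAdjoint hformA hnear
    have hlb : ∀ l ∈ TF.paperSpectrum, μ ≤ l := by
      intro l hlmem
      by_contra hcon
      push_neg at hcon
      exact hnotmem l hcon hlmem
    exact le_antisymm (csInf_le ⟨μ, hlb⟩ hμmem) (le_csInf ⟨μ, hμmem⟩ hlb)
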